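/- The sequence of harmonic numbers h(n) = ∑_{i=1}^n 1/i is not hypergeometric: there is no rational function r ∈ ℚ(x) such that h(n+1) = r(n)·h(n) for all sufficiently large n. -/

import Mathlib

open Filter Polynomial

private lemma ev_ne_zero {p : Polynomial ℚ} (hp : p ≠ 0) :
    ∀ᶠ n : ℕ in atTop, p.eval (n : ℚ) ≠ 0 := by
  have hfin : {x : ℚ | p.IsRoot x}.Finite := p.finite_setOf_isRoot hp
  have hfin2 : {n : ℕ | p.eval (n : ℚ) = 0}.Finite := by
    have : {n : ℕ | p.eval (n : ℚ) = 0} = (Nat.cast : ℕ → ℚ) ⁻¹' {x : ℚ | p.IsRoot x} := rfl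
    rw [this]
    exact hfin.preimage (Nat.cast_injective (R := ℚ)).injOn
  rw [← Nat.cofinite_eq_atTop]
  exact hfin2.eventually_cofinite_notMem

private lemma cast_eval (p : Polynomial ℚ) (x : ℚ) :
    (p.map (algebraMap ℚ ℝ)).eval ((x : ℝ)) = ((p.eval x : ℚ) : ℝ) := by
  have hx : ((x : ℝ)) = algebraMap ℚ ℝ x := rfl
  rw [hx, Polynomial.eval_map, Polynomial.eval₂_at_apply]
  rfl

set_option maxHeartbeats 1600000 in
/-- The harmonic numbers are not hypergeometric over ℚ. -/
theorem harmonic_not_hypergeometric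
    (h : ℕ → ℚ) (hh : ∀ n, h n = ∑ i ∈ Finset.range n, (1 : ℚ) / (i + 1)) :
    ¬ ∃ r : RatFunc ℚ, ∀ᶠ n : ℕ in atTop,
      h (n + 1) = r.eval (RingHom.id ℚ) (n : ℚ) * h n := by
  rintro ⟨r, hr⟩
  have hq0 : r.denom ≠ 0 := r.denom_ne_zero
  have heval : ∀ x : ℚ, r.eval (RingHom.id ℚ) x = r.num.eval x / r.denom.eval x := by
    intro x
    simp only [RatFunc.eval]
    rfl
  have hsucc : ∀ n : ℕ, h (n + 1) = h n + 1 / ((n : ℚ) + 1) := by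
    intro n
    rw [hh, hh, Finset.sum_range_succ]
  -- case r.num = r.denom
  by_cases hs0 : r.num - r.denom = 0
  · obtain ⟨n, h1, h2⟩ := (hr.and (ev_ne_zero hq0)).exists
    have hpq : r.num = r.denom := by linear_combination hs0
    rw [heval, hpq, div_self h2, one_mul, hsucc] at h1
    have h3 : (1 : ℚ) / ((n : ℚ) + 1) = 0 := by linarith
    have hn1 : ((n : ℚ) + 1) ≠ 0 := by positivity
    simp [hn1] at h3
  set s : Polynomial ℚ := r.num - r.denom with hs
  -- key eventual identity in ℚ
  have hev4 : ∀ᶠ n : ℕ in atTop,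
      h n = r.denom.eval (n : ℚ) / (((n : ℚ) + 1) * s.eval (n : ℚ)) := by
    filter_upwards [hr, ev_ne_zero hq0, ev_ne_zero hs0] with n h1 h2 h3
    have hn1 : ((n : ℚ) + 1) ≠ 0 := by positivity
    rw [heval, hsucc] at h1
    rw [eq_div_iff (mul_ne_zero hn1 h3)]
    have hsev : s.eval (n : ℚ) = r.num.eval (n : ℚ) - r.denom.eval (n : ℚ) := by
      simp [hs]
    rw [hsev]
    field_simp at h1
    linear_combination -h1
  -- harmonic facts
  have hhH : ∀ n, h n = harmonic n := by
    intro n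
    rw [hh, harmonic]
    refine Finset.sum_congr rfl fun i _ => ?_
    push_cast
    rw [one_div]
  have hH : Tendsto (fun n : ℕ => ((h n : ℚ) : ℝ)) atTop atTop := by
    refine Real.tendsto_sum_range_one_div_nat_succ_atTop.congr fun n => ?_
    rw [hh]
    push_cast
    rfl
  have hdiv0 : Tendsto (fun n : ℕ => ((h n : ℚ) : ℝ) / n) atTop (nhds 0) := by
    have l1 : Tendsto (fun x : ℝ => (1 + Real.log x) / x) atTop (nhds 0) := by
      have l2 := Real.isLittleO_log_id_atTop.tendsto_div_nhds_zero
      have l3 : Tendsto (fun x : ℝ => 1 / x) atTop (nhds (0 : ℝ)) := by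
        simpa [one_div] using tendsto_inv_atTop_zero
      simpa [add_div] using l3.add l2
    have l4 : Tendsto (fun n : ℕ => (1 + Real.log n) / n) atTop (nhds 0) :=
      l1.comp tendsto_natCast_atTop_atTop
    refine squeeze_zero' ?_ ?_ l4
    · filter_upwards [eventually_ge_atTop 1] with n hn
      have h0 : (0 : ℚ) ≤ h n := by
        rw [hh]
        positivity
      exact div_nonneg (by exact_mod_cast h0) (Nat.cast_nonneg n)
    · filter_upwards [eventually_ge_atTop 1] with n hn
      have hb : ((h n : ℚ) : ℝ) ≤ 1 + Real.log n := by
        rw [hhH]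
        exact harmonic_le_one_add_log n
      have hn0 : (0 : ℝ) < n := by exact_mod_cast hn
      exact div_le_div_of_nonneg_right hb hn0.le
  -- real polynomials
  set PA : Polynomial ℝ := r.denom.map (algebraMap ℚ ℝ) with hPAdef
  set PB : Polynomial ℝ := ((X + 1) * s).map (algebraMap ℚ ℝ) with hPBdef
  have hPA0 : PA ≠ 0 := Polynomial.map_ne_zero hq0
  have hX1 : (X + 1 : Polynomial ℚ) ≠ 0 := by
    simpa using Polynomial.X_add_C_ne_zero (1 : ℚ)
  have hPB0 : PB ≠ 0 := Polynomial.map_ne_zero (mul_ne_zero hX1 hs0)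
  -- eventual identity in ℝ
  have hevR : ∀ᶠ n : ℕ in atTop,
      ((h n : ℚ) : ℝ) = PA.eval (n : ℝ) / PB.eval (n : ℝ) := by
    filter_upwards [hev4] with n h1
    have hn : ((n : ℝ)) = ((n : ℚ) : ℝ) := by norm_cast
    rw [hPAdef, hPBdef, hn, cast_eval, cast_eval, h1]
    have hB : ((X + 1 : Polynomial ℚ) * s).eval ((n : ℚ)) = ((n : ℚ) + 1) * s.eval (n : ℚ) := by
      simp
    rw [hB]
    push_cast
    ring
  have TF : Tendsto (fun n : ℕ => PA.eval (n : ℝ) / PB.eval (n : ℝ)) atTop atTop :=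
    hH.congr' hevR
  have TF2 : Tendsto (fun n : ℕ => PA.eval (n : ℝ) / ((X * PB).eval (n : ℝ))) atTop (nhds 0) := by
    refine (hdiv0.congr' ?_)
    filter_upwards [hevR] with n h1
    rw [h1, Polynomial.eval_mul, Polynomial.eval_X, div_div, mul_comm]
  -- degree comparisons
  have deg1 : PB.degree < PA.degree := by
    by_contra hle
    push_neg at hle
    have hlim : ∃ c : ℝ, Tendsto (fun x : ℝ => PA.eval x / PB.eval x) atTop (nhds c) := by
      rcases lt_or_eq_of_le hle with hlt | heq
      · exact ⟨0, Polynomial.div_tendsto_zero_of_degree_lt PA PB hlt⟩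
      · exact ⟨_, Polynomial.div_tendsto_leadingCoeff_div_of_degree_eq PA PB heq⟩
    obtain ⟨c, hc⟩ := hlim
    exact not_tendsto_atTop_of_tendsto_nhds (hc.comp tendsto_natCast_atTop_atTop) TF
  have deg2 : (X * PB).degree ≤ PA.degree := by
    have hd : (X * PB).degree = PB.degree + 1 := by
      rw [Polynomial.degree_mul, Polynomial.degree_X]
      exact add_comm _ _
    rw [hd]
    exact Nat.WithBot.add_one_le_of_lt deg1
  have hXPB0 : (X : Polynomial ℝ) * PB ≠ 0 := mul_ne_zero Polynomial.X_ne_zero hPB0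
  rcases eq_or_lt_of_le deg2 with heq | hlt
  · -- degrees equal: limit is nonzero leading coeff ratio, contradiction with limit 0
    have hc := Polynomial.div_tendsto_leadingCoeff_div_of_degree_eq PA (X * PB) heq.symm
    have := tendsto_nhds_unique (hc.comp tendsto_natCast_atTop_atTop) TF2
    have hne : PA.leadingCoeff / (X * PB).leadingCoeff ≠ 0 :=
      div_ne_zero (Polynomial.leadingCoeff_ne_zero.mpr hPA0)
        (Polynomial.leadingCoeff_ne_zero.mpr hXPB0)
    exact hne this
  · -- strict: |ratio| → ∞ but ratio → 0
    have hc := Polynomial.abs_div_tendsto_atTop_of_degree_gt PA (X * PB) hlt hXPB0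
    have h0 : Tendsto (fun n : ℕ => |PA.eval (n : ℝ) / ((X * PB).eval (n : ℝ))|) atTop (nhds 0) := by
      simpa using TF2.abs
    exact not_tendsto_atTop_of_tendsto_nhds h0 (hc.comp tendsto_natCast_atTop_atTop)
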